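/- The third-order term of the short-time expansion of the decoherence function has the form −G_N(a_1,…,a_{N+1}) · ∑_j [W Γ W y(0)]_j · t³, i.e., the only matrix structure surviving at order t³ is WΓW, with a scalar coefficient depending only on the pulse intervals. -/

import Mathlib

open Matrix Finset

/-- The decoherence function of a qubit under an `N`-pulse dynamical decoupling
sequence with normalized intervals `a`, rate matrix `Γ`, field values `w`, and
initial distribution `y0`. -/
noncomputable def decoherenceFn {N M : ℕ} (Γ : Matrix (Fin M) (Fin M) ℝ)
    (w : Fin M → ℝ) (y0 : Fin M → ℝ) (a : Fin (N + 1) → ℝ) (t : ℝ) : ℂ :=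
  ∑ j, (((List.ofFn fun n : Fin (N + 1) =>
      NormedSpace.exp ((a n * t) •
        ((Γ.map (Complex.ofReal)) +
          ((-1 : ℝ) ^ (n : ℕ)) • (Complex.I • Matrix.diagonal fun j => (w j : ℂ))))).reverse.prod).mulVec
      (fun j => (y0 j : ℂ))) j

namespace DDaux
open NormedSpace

attribute [local instance] Matrix.linftyOpSemiNormedRing Matrix.linftyOpNormedRing
  Matrix.linftyOpNormedAlgebra

abbrev Mx (M : ℕ) := Matrix (Fin M) (Fin M) ℂ

variable {M : ℕ}

noncomputable def P : List (Mx M) → ℝ → Mx M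
  | [] => fun _ => 1
  | C :: l => fun t => exp (t • C) * P l t

noncomputable def P1 : List (Mx M) → ℝ → Mx M
  | [] => fun _ => 0
  | C :: l => fun t => exp (t • C) * C * P l t + exp (t • C) * P1 l t

noncomputable def P2 : List (Mx M) → ℝ → Mx M
  | [] => fun _ => 0
  | C :: l => fun t =>
      (exp (t • C) * C * C * P l t + exp (t • C) * C * P1 l t)
      + (exp (t • C) * C * P1 l t + exp (t • C) * P2 l t)

noncomputable def P3 : List (Mx M) → ℝ → Mx M
  | [] => fun _ => 0
  | C :: l => fun t =>
      ((exp (t • C) * C * C * C * P l t + exp (t • C) * C * C * P1 l t)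
        + (exp (t • C) * C * C * P1 l t + exp (t • C) * C * P2 l t))
      + ((exp (t • C) * C * C * P1 l t + exp (t • C) * C * P2 l t)
        + (exp (t • C) * C * P2 l t + exp (t • C) * P3 l t))

lemma hasDerivAt_P : ∀ (l : List (Mx M)) (t : ℝ), HasDerivAt (P l) (P1 l t) t
  | [], t => by simp only [P, P1]; exact hasDerivAt_const t (1 : Mx M)
  | C :: l, t => by
      have hE := hasDerivAt_exp_smul_const (𝕂 := ℝ) C t
      simp only [P, P1]; exact hE.mul (hasDerivAt_P l t)

lemma hasDerivAt_P1 : ∀ (l : List (Mx M)) (t : ℝ), HasDerivAt (P1 l) (P2 l t) t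
  | [], t => by simp only [P1, P2]; exact hasDerivAt_const t (0 : Mx M)
  | C :: l, t => by
      have hE := hasDerivAt_exp_smul_const (𝕂 := ℝ) C t
      simp only [P1, P2]; exact
        ((hE.mul_const C).mul (hasDerivAt_P l t)).add (hE.mul (hasDerivAt_P1 l t))

lemma hasDerivAt_P2 : ∀ (l : List (Mx M)) (t : ℝ), HasDerivAt (P2 l) (P3 l t) t
  | [], t => by simp only [P2, P3]; exact hasDerivAt_const t (0 : Mx M)
  | C :: l, t => by
      have hE := hasDerivAt_exp_smul_const (𝕂 := ℝ) C t
      simp only [P2, P3]; exact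
        ((((hE.mul_const C).mul_const C).mul (hasDerivAt_P l t)).add
          ((hE.mul_const C).mul (hasDerivAt_P1 l t))).add
        (((hE.mul_const C).mul (hasDerivAt_P1 l t)).add (hE.mul (hasDerivAt_P2 l t)))

lemma P_zero : ∀ (l : List (Mx M)), P l 0 = 1
  | [] => rfl
  | C :: l => by simp [P, P_zero l]

lemma P_prod : ∀ (l : List (Mx M)) (t : ℝ),
    P l t = (l.map fun C => exp (t • C)).prod
  | [], t => rfl
  | C :: l, t => by simp [P, P_prod l]

/-! ### coefficient combinatorics -/

def pc : Bool → ℝ × ℝ → ℝ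
  | false, p => p.1
  | true, p => p.2

def Asum : List (ℝ × ℝ) → ℝ
  | [] => 0
  | p :: l => p.1 + Asum l

def Ssum : List (ℝ × ℝ) → ℝ
  | [] => 0
  | p :: l => p.2 + Ssum l

def rc : Bool → List (ℝ × ℝ) → ℝ
  | false, l => Asum l
  | true, l => Ssum l

def c2 (u v : Bool) : List (ℝ × ℝ) → ℝ
  | [] => 0
  | p :: l => pc u p * pc v p + 2 * (pc u p * rc v l) + c2 u v l

def c3 (u v x : Bool) : List (ℝ × ℝ) → ℝ
  | [] => 0
  | p :: l => pc u p * pc v p * pc x p + 3 * (pc u p * pc v p * rc x l)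
      + 3 * (pc u p * c2 v x l) + c3 u v x l

noncomputable def matL (Γ' W' : Mx M) : List (ℝ × ℝ) → List (Mx M) :=
  List.map fun p => p.1 • Γ' + p.2 • W'

variable (Γ' W' : Mx M)

lemma P1_matL_zero : ∀ (l : List (ℝ × ℝ)),
    P1 (matL Γ' W' l) 0 = Asum l • Γ' + Ssum l • W'
  | [] => by simp [P1, matL, Asum, Ssum]
  | p :: l => by
      simp only [matL, List.map_cons, P1, zero_smul, exp_zero, one_mul, mul_one,
        P_zero, Asum, Ssum]
      rw [show List.map (fun p : ℝ × ℝ => p.1 • Γ' + p.2 • W') l = matL Γ' W' l from rfl,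
        P1_matL_zero l]
      module

lemma P2_matL_zero : ∀ (l : List (ℝ × ℝ)),
    P2 (matL Γ' W' l) 0 =
      c2 false false l • (Γ' * Γ') + c2 false true l • (Γ' * W')
      + c2 true false l • (W' * Γ') + c2 true true l • (W' * W')
  | [] => by simp [P2, matL, c2]
  | p :: l => by
      simp only [matL, List.map_cons, P2, zero_smul, exp_zero, one_mul, mul_one, P_zero]
      rw [show List.map (fun p : ℝ × ℝ => p.1 • Γ' + p.2 • W') l = matL Γ' W' l from rfl,
        P1_matL_zero Γ' W' l, P2_matL_zero l]
      simp only [c2, pc, rc, mul_add, add_mul, smul_mul_assoc, mul_smul_comm, smul_smul]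
      module

lemma P3_matL_zero : ∀ (l : List (ℝ × ℝ)),
    P3 (matL Γ' W' l) 0 =
      c3 false false false l • (Γ' * (Γ' * Γ')) + c3 false false true l • (Γ' * (Γ' * W'))
      + c3 false true false l • (Γ' * (W' * Γ')) + c3 false true true l • (Γ' * (W' * W'))
      + c3 true false false l • (W' * (Γ' * Γ')) + c3 true false true l • (W' * (Γ' * W'))
      + c3 true true false l • (W' * (W' * Γ')) + c3 true true true l • (W' * (W' * W'))
  | [] => by simp [P3, matL, c3]
  | p :: l => by
      simp only [matL, List.map_cons, P3, zero_smul, exp_zero, one_mul, mul_one, P_zero]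
      rw [show List.map (fun p : ℝ × ℝ => p.1 • Γ' + p.2 • W') l = matL Γ' W' l from rfl,
        P1_matL_zero Γ' W' l, P2_matL_zero Γ' W' l, P3_matL_zero l]
      simp only [c3, c2, pc, rc, mul_add, add_mul, smul_mul_assoc, mul_smul_comm, smul_smul,
        mul_assoc]
      module

lemma c2_tt (l : List (ℝ × ℝ)) : c2 true true l = Ssum l ^ 2 := by
  induction l with
  | nil => simp [c2, Ssum]
  | cons p l ih => simp only [c2, pc, rc, Ssum, ih]; ring

lemma c3_ttt (l : List (ℝ × ℝ)) : c3 true true true l = Ssum l ^ 3 := by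
  induction l with
  | nil => simp [c3, Ssum]
  | cons p l ih => simp only [c3, pc, rc, Ssum, ih, c2_tt]; ring

/-! ### the linear functional -/

noncomputable def Phi (y0 : Fin M → ℝ) : Mx M →ₗ[ℝ] ℂ where
  toFun X := ∑ j, (X.mulVec fun k => (y0 k : ℂ)) j
  map_add' X Y := by simp [Matrix.add_mulVec, Finset.sum_add_distrib]
  map_smul' r X := by
    simp [Matrix.smul_mulVec, Finset.smul_sum]

lemma Phi_left (Γ : Matrix (Fin M) (Fin M) ℝ) (hΓ : ∀ k, ∑ j, Γ j k = 0)
    (y0 : Fin M → ℝ) (X : Mx M) : Phi y0 (Γ.map Complex.ofReal * X) = 0 := by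
  simp only [Phi, LinearMap.coe_mk, AddHom.coe_mk, Matrix.mulVec, Matrix.mul_apply,
    dotProduct, Matrix.map_apply]
  rw [Finset.sum_comm]
  refine Finset.sum_eq_zero fun k _ => ?_
  rw [← Finset.sum_mul]
  convert zero_mul ((y0 k : ℂ)) using 2
  rw [Finset.sum_comm]
  refine Finset.sum_eq_zero fun m _ => ?_
  rw [← Finset.sum_mul]
  have : (∑ j, (Γ j m : ℂ)) = 0 := by
    rw [← Complex.ofReal_sum, hΓ m]; simp
  rw [this, zero_mul]

lemma Phi_right (Γ : Matrix (Fin M) (Fin M) ℝ) (y0 : Fin M → ℝ)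
    (hy : Γ.mulVec y0 = 0) (X : Mx M) : Phi y0 (X * Γ.map Complex.ofReal) = 0 := by
  have h0 : (Γ.map Complex.ofReal).mulVec (fun k => (y0 k : ℂ)) = 0 := by
    funext j
    have := congrFun hy j
    simp only [Matrix.mulVec, dotProduct, Matrix.map_apply, Pi.zero_apply] at this ⊢
    exact_mod_cast this
  simp only [Phi, LinearMap.coe_mk, AddHom.coe_mk, ← Matrix.mulVec_mulVec, h0]
  simp [Matrix.mulVec_zero]

lemma Phi_P3 (Γ : Matrix (Fin M) (Fin M) ℝ) (hΓ : ∀ k, ∑ j, Γ j k = 0)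
    (y0 : Fin M → ℝ) (hy : Γ.mulVec y0 = 0) (W' : Mx M) (l : List (ℝ × ℝ))
    (hS : Ssum l = 0) :
    Phi y0 (P3 (matL (Γ.map Complex.ofReal) W' l) 0) =
      c3 true false true l • Phi y0 (W' * (Γ.map Complex.ofReal * W')) := by
  set Γ' := Γ.map Complex.ofReal with hΓ'
  have hLf : ∀ X : Mx M, Phi y0 (Γ' * X) = 0 := fun X => Phi_left Γ hΓ y0 X
  have hRt : ∀ X : Mx M, Phi y0 (X * Γ') = 0 := fun X => Phi_right Γ y0 hy X
  have h1 : W' * (Γ' * Γ') = (W' * Γ') * Γ' := by rw [mul_assoc]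
  have h2 : W' * (W' * Γ') = (W' * W') * Γ' := by rw [mul_assoc]
  rw [P3_matL_zero]
  simp only [map_add, _root_.map_smul, hLf, h1, h2, hRt,
    c3_ttt, hS, smul_zero, zero_add, add_zero]
  ring_nf
  simp

end DDaux

open DDaux NormedSpace

attribute [local instance] Matrix.linftyOpSemiNormedRing Matrix.linftyOpNormedRing
  Matrix.linftyOpNormedAlgebra

/-- The third-order term of the short-time expansion of the decoherence function
has the form `-G_N(a) ⬝ ∑ⱼ [W Γ W y₀]ⱼ ⬝ t³`: the only surviving matrix structure
at order `t³` is `W Γ W`, with a scalar coefficient `G` depending only on the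
pulse intervals `a`. -/
theorem third_order_term_structure {N : ℕ}
    (a : Fin (N + 1) → ℝ) (ha : ∀ n, 0 ≤ a n) (hasum : ∑ n, a n = 1)
    (hecho : ∑ n : Fin (N + 1), (-1 : ℝ) ^ (n : ℕ) * a n = 0) :
    ∃ G : ℝ, ∀ (M : ℕ) (Γ : Matrix (Fin M) (Fin M) ℝ),
      (∀ k, ∑ j, Γ j k = 0) →
      ∀ (w : Fin M → ℝ) (y0 : Fin M → ℝ),
        (∀ j, 0 ≤ y0 j) → (∑ j, y0 j = 1) → Γ.mulVec y0 = 0 →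
        iteratedDeriv 3 (fun t => decoherenceFn Γ w y0 a t) 0 =
          (-(6 * G) * ∑ j, ((Matrix.diagonal w * Γ * Matrix.diagonal w).mulVec y0) j : ℝ) := by
  classical
  set lp : List (ℝ × ℝ) :=
    (List.ofFn fun n : Fin (N + 1) => (a n, (-1 : ℝ) ^ (n : ℕ) * a n)).reverse with hlp
  have hS : Ssum lp = 0 := by
    have hSsum : ∀ l : List (ℝ × ℝ), Ssum l = (l.map Prod.snd).sum := by
      intro l; induction l with
      | nil => rfl
      | cons p l ih => simp [Ssum, ih]
    rw [hSsum, hlp, List.map_reverse, List.sum_reverse, List.map_ofFn, List.sum_ofFn]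
    simpa using hecho
  refine ⟨c3 true false true lp / 6, ?_⟩
  intro M Γ hΓ w y0 _hy0 _hy0sum hΓy0
  set Γ' : Mx M := Γ.map Complex.ofReal with hΓ'
  set Wc : Mx M := Matrix.diagonal fun j => (w j : ℂ) with hWc
  set W' : Mx M := Complex.I • Wc with hW'
  set l : List (Mx M) := matL Γ' W' lp with hl
  -- identify the decoherence function with `Phi y0 ∘ P l`
  have hfn : (fun t => decoherenceFn Γ w y0 a t) = fun t => Phi y0 (P l t) := by
    funext t
    have hlist : l.map (fun C => exp (t • C)) =
        (List.ofFn fun n : Fin (N + 1) =>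
          exp ((a n * t) • (Γ' + ((-1 : ℝ) ^ (n : ℕ)) • W'))).reverse := by
      rw [hl, hlp, matL, List.map_reverse, List.map_reverse, List.map_ofFn, List.map_ofFn]
      refine congrArg List.reverse (congrArg List.ofFn (funext fun n => ?_))
      simp only [Function.comp_apply]
      congr 1
      module
    have : decoherenceFn Γ w y0 a t =
        ∑ j, (((l.map fun C => exp (t • C)).prod).mulVec fun j => (y0 j : ℂ)) j := by
      rw [hlist]; rfl
    rw [this, P_prod]
    rfl
  -- derivative transfer through the linear functional
  have key : ∀ (g g' : ℝ → Mx M) (t : ℝ), HasDerivAt g (g' t) t →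
      HasDerivAt (fun u => Phi y0 (g u)) (Phi y0 (g' t)) t := by
    intro g g' t h
    have := (LinearMap.toContinuousLinearMap (Phi y0)).hasFDerivAt.comp_hasDerivAt t h
    exact this
  have d1 : deriv (fun t => Phi y0 (P l t)) = fun t => Phi y0 (P1 l t) :=
    funext fun t => (key _ _ t (hasDerivAt_P l t)).deriv
  have d2 : deriv (fun t => Phi y0 (P1 l t)) = fun t => Phi y0 (P2 l t) :=
    funext fun t => (key _ _ t (hasDerivAt_P1 l t)).deriv
  have d3 : deriv (fun t => Phi y0 (P2 l t)) = fun t => Phi y0 (P3 l t) :=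
    funext fun t => (key _ _ t (hasDerivAt_P2 l t)).deriv
  rw [hfn, show (3 : ℕ) = 2 + 1 from rfl, iteratedDeriv_succ', d1,
    show (2 : ℕ) = 1 + 1 from rfl, iteratedDeriv_succ', d2,
    show (1 : ℕ) = 0 + 1 from rfl, iteratedDeriv_succ', d3, iteratedDeriv_zero]
  rw [hl, Phi_P3 Γ hΓ y0 hΓy0 W' lp hS]
  -- evaluate the surviving word
  have hw : W' * (Γ' * W') = -(Wc * (Γ' * Wc)) := by
    rw [hW']
    simp only [smul_mul_assoc, mul_smul_comm, smul_smul, Complex.I_mul_I, neg_one_smul]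
  have hword : Wc * (Γ' * Wc) =
      (Matrix.diagonal w * Γ * Matrix.diagonal w).map Complex.ofReal := by
    ext i j
    simp only [hWc, hΓ', Matrix.diagonal_mul, Matrix.mul_diagonal, Matrix.map_apply]
    push_cast
    ring
  have hPhiMap : Phi y0 ((Matrix.diagonal w * Γ * Matrix.diagonal w).map Complex.ofReal) =
      ((∑ j, ((Matrix.diagonal w * Γ * Matrix.diagonal w).mulVec y0) j : ℝ) : ℂ) := by
    simp only [Phi, LinearMap.coe_mk, AddHom.coe_mk, Matrix.mulVec, dotProduct,
      Matrix.map_apply]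
    push_cast
    rfl
  rw [hw, map_neg, hword, hPhiMap]
  push_cast [Complex.real_smul]
  ring
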